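/- Let μ be a finite, compactly-supported Borel measure on ℝ^n. Let h: ℝ^n → ℝ be a bounded, measurable function with ∫ h dμ = 0. For sufficiently small ε > 0, let μ_ε be the measure whose density with respect to μ is the non-negative function 1 + εh. Then ‖h‖_{H^{−1}(μ)} ≤ liminf_{ε → 0^+} W₂(μ, μ_ε)/ε. -/

import Mathlib

open MeasureTheory Real

/-- The L²-Wasserstein distance: infimum over couplings γ of μ₁ and μ₂ of
`(∫ |x-y|² dγ)^{1/2}`, equal to `∞` (the empty infimum) if there is no coupling. -/
noncomputable def W2 {n : ℕ} (μ₁ μ₂ : Measure (EuclideanSpace ℝ (Fin n))) : ENNReal :=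
  ⨅ γ : {γ : Measure (EuclideanSpace ℝ (Fin n) × EuclideanSpace ℝ (Fin n)) //
      γ.map Prod.fst = μ₁ ∧ γ.map Prod.snd = μ₂},
    (∫⁻ p, ENNReal.ofReal (‖p.1 - p.2‖ ^ 2) ∂γ.1) ^ (1 / 2 : ℝ)

/-- `‖u‖_{H^{-1}(μ)} = sup { ∫ u φ dμ : φ ∈ C^∞(ℝⁿ), ∫ |∇φ|² dμ ≤ 1 }` (in `[0,∞]`). -/
noncomputable def Hm1Mu {n : ℕ} (μ : Measure (EuclideanSpace ℝ (Fin n)))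
    (u : EuclideanSpace ℝ (Fin n) → ℝ) : ENNReal :=
  ⨆ φ : {φ : EuclideanSpace ℝ (Fin n) → ℝ //
      ContDiff ℝ (⊤ : ℕ∞) φ ∧ (∫ x, ‖gradient φ x‖ ^ 2 ∂μ) ≤ 1},
    ENNReal.ofReal (∫ x, u x * φ.1 x ∂μ)

set_option maxHeartbeats 2000000 in
/-- Brenier-McCann remark: for a finite compactly supported Borel measure μ and a bounded
measurable `h` with `∫ h dμ = 0`, letting `μ_ε` have density `1 + εh` w.r.t. μ,
`‖h‖_{H^{-1}(μ)} ≤ liminf_{ε → 0⁺} W₂(μ, μ_ε)/ε`. -/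
theorem Hm1_le_liminf_W2 {n : ℕ} (μ : Measure (EuclideanSpace ℝ (Fin n)))
    (hfin : IsFiniteMeasure μ)
    (hsupp : ∃ K : Set (EuclideanSpace ℝ (Fin n)), IsCompact K ∧ μ Kᶜ = 0)
    (h : EuclideanSpace ℝ (Fin n) → ℝ)
    (hmeas : Measurable h) (hbdd : ∃ M : ℝ, ∀ x, |h x| ≤ M)
    (hzero : ∫ x, h x ∂μ = 0) :
    Hm1Mu μ h ≤
      Filter.liminf
        (fun ε : ℝ =>
          W2 μ (μ.withDensity fun x => ENNReal.ofReal (1 + ε * h x)) / ENNReal.ofReal ε)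
        (nhdsWithin 0 (Set.Ioi 0)) := by
  obtain ⟨K, hK, hKnull⟩ := hsupp
  obtain ⟨M, hM⟩ := hbdd
  have hM0 : 0 ≤ M := le_trans (abs_nonneg _) (hM 0)
  have hM1 : (0:ℝ) < M + 1 := by linarith
  rw [Hm1Mu]
  refine iSup_le ?_
  rintro ⟨φ, hφsm, hφ1⟩
  show ENNReal.ofReal (∫ x, h x * φ x ∂μ) ≤ _
  by_contra hcon
  rw [not_le] at hcon
  obtain ⟨c, hc1, hc2⟩ := exists_between hcon
  have hcfin : c < ⊤ := hc2.trans ENNReal.ofReal_lt_top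
  have hc0 : 0 < c := lt_of_le_of_lt zero_le hc1
  have hcR : 0 < c.toReal := ENNReal.toReal_pos hc0.ne' hcfin.ne
  -- analytic setup
  have hφc : Continuous φ := hφsm.continuous
  have hφd : Differentiable ℝ φ := hφsm.differentiable (by simp)
  have hf'c : Continuous (fderiv ℝ φ) := hφsm.continuous_fderiv (by simp)
  have hf'sm : ContDiff ℝ (⊤ : ℕ∞) (fderiv ℝ φ) := hφsm.fderiv_right (by exact_mod_cast le_top)
  have hf'd : Differentiable ℝ (fderiv ℝ φ) := hf'sm.differentiable (by simp)
  have hgradc : Continuous (gradient φ) :=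
    (InnerProductSpace.toDual ℝ (EuclideanSpace ℝ (Fin n))).symm.continuous.comp hf'c
  obtain ⟨R, hR⟩ := hK.isBounded.subset_closedBall 0
  have hSconv : Convex ℝ (Metric.closedBall (0 : EuclideanSpace ℝ (Fin n)) R) :=
    convex_closedBall 0 R
  have hScomp : IsCompact (Metric.closedBall (0 : EuclideanSpace ℝ (Fin n)) R) :=
    isCompact_closedBall 0 R
  obtain ⟨C₂', hC₂'⟩ :=
    hScomp.exists_bound_of_continuousOn (hf'sm.continuous_fderiv (by simp)).continuousOn
  set C₂ : ℝ := max C₂' 0 with hC₂def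
  have hC₂0 : 0 ≤ C₂ := le_max_right _ _
  obtain ⟨Bφ, hBφ⟩ := hK.exists_bound_of_continuousOn hφc.continuousOn
  obtain ⟨B1, hB1⟩ := hK.exists_bound_of_continuousOn hgradc.continuousOn
  -- Taylor-type estimate on K
  have htaylor : ∀ x ∈ K, ∀ y ∈ K,
      φ y - φ x ≤ ‖gradient φ x‖ * ‖y - x‖ + C₂ * ‖y - x‖ ^ 2 := by
    intro x hx y hy
    have hxS : x ∈ Metric.closedBall (0 : EuclideanSpace ℝ (Fin n)) R := hR hx
    have hyS : y ∈ Metric.closedBall (0 : EuclideanSpace ℝ (Fin n)) R := hR hy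
    have hseg : segment ℝ x y ⊆ Metric.closedBall (0 : EuclideanSpace ℝ (Fin n)) R :=
      hSconv.segment_subset hxS hyS
    have hbound : ∀ u ∈ segment ℝ x y,
        ‖fderiv ℝ φ u - fderiv ℝ φ x‖ ≤ C₂ * ‖y - x‖ := by
      intro u hu
      have h1 : ‖fderiv ℝ φ u - fderiv ℝ φ x‖ ≤ C₂ * ‖u - x‖ := by
        refine hSconv.norm_image_sub_le_of_norm_fderiv_le (fun v _ => hf'd v) ?_ hxS (hseg hu)
        intro v hv; exact le_trans (hC₂' v hv) (le_max_left _ _)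
      have h2 : ‖u - x‖ ≤ ‖y - x‖ := by
        obtain ⟨a, b, ha, hb, hab, rfl⟩ := hu
        have ha' : a = 1 - b := by linarith
        have hrw : a • x + b • y - x = b • (y - x) := by
          rw [ha', sub_smul, one_smul, smul_sub]; abel
        rw [hrw, norm_smul, Real.norm_eq_abs, abs_of_nonneg hb]
        exact mul_le_of_le_one_left (norm_nonneg _) (by linarith)
      calc ‖fderiv ℝ φ u - fderiv ℝ φ x‖ ≤ C₂ * ‖u - x‖ := h1
        _ ≤ C₂ * ‖y - x‖ := mul_le_mul_of_nonneg_left h2 hC₂0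
    have hT :
        ‖φ y - φ x - (fderiv ℝ φ x) (y - x)‖ ≤ (C₂ * ‖y - x‖) * ‖y - x‖ :=
      (convex_segment x y).norm_image_sub_le_of_norm_fderiv_le'
        (fun u _ => hφd u) hbound (left_mem_segment ℝ x y) (right_mem_segment ℝ x y)
    have hinner : inner ℝ (gradient φ x) (y - x) = fderiv ℝ φ x (y - x) :=
      InnerProductSpace.toDual_symm_apply
    have hCS : (fderiv ℝ φ x) (y - x) ≤ ‖gradient φ x‖ * ‖y - x‖ := by
      rw [← hinner]; exact real_inner_le_norm _ _
    have hT' : φ y - φ x - (fderiv ℝ φ x) (y - x) ≤ (C₂ * ‖y - x‖) * ‖y - x‖ :=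
      le_trans (le_abs_self _) (by rwa [Real.norm_eq_abs] at hT)
    nlinarith [hT', hCS, sq_nonneg ‖y - x‖]
  have hμK : ∀ᵐ x ∂μ, x ∈ K := by rw [ae_iff]; exact hKnull
  have hIφμ : Integrable φ μ := by
    refine (integrable_const Bφ).mono' hφc.aestronglyMeasurable ?_
    filter_upwards [hμK] with x hx; exact hBφ x hx
  have hIhφμ : Integrable (fun x => h x * φ x) μ := by
    refine (integrable_const (M * Bφ)).mono'
      ((hmeas.mul hφc.measurable).aestronglyMeasurable) ?_
    filter_upwards [hμK] with x hx
    calc ‖h x * φ x‖ = ‖h x‖ * ‖φ x‖ := norm_mul _ _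
      _ ≤ M * Bφ := by
          refine mul_le_mul ?_ (hBφ x hx) (norm_nonneg _) hM0
          rw [Real.norm_eq_abs]; exact hM x
  -- the key quantitative estimate
  have hkey : ∀ ε : ℝ, 0 < ε → ε < 1 / (M + 1) →
      W2 μ (μ.withDensity fun x => ENNReal.ofReal (1 + ε * h x)) / ENNReal.ofReal ε < c →
      ∫ x, h x * φ x ∂μ ≤ c.toReal + C₂ * c.toReal ^ 2 * ε := by
    intro ε hε hεM hlt
    have hεne : ENNReal.ofReal ε ≠ 0 := by simp [hε, not_le.mpr hε]
    rw [ENNReal.div_lt_iff (Or.inl hεne) (Or.inl ENNReal.ofReal_ne_top)] at hlt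
    rw [W2] at hlt
    obtain ⟨⟨γ, hγ1, hγ2⟩, hγlt⟩ := iInf_lt_iff.mp hlt
    have hγlt' : (∫⁻ p, ENNReal.ofReal (‖p.1 - p.2‖ ^ 2) ∂γ) ^ (1 / 2 : ℝ)
        < c * ENNReal.ofReal ε := hγlt
    have hγfin : IsFiniteMeasure γ := by
      constructor
      have huniv : γ Set.univ = μ Set.univ := by
        rw [← hγ1, Measure.map_apply measurable_fst MeasurableSet.univ, Set.preimage_univ]
      rw [huniv]; exact measure_lt_top μ _
    have hKm : MeasurableSet K := hK.isClosed.measurableSet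
    have hμεnull : (μ.withDensity fun x => ENNReal.ofReal (1 + ε * h x)) Kᶜ = 0 := by
      rw [withDensity_apply _ hKm.compl]
      exact setLIntegral_measure_zero _ _ hKnull
    have haeγ : ∀ᵐ p ∂γ, p.1 ∈ K ∧ p.2 ∈ K := by
      have h1 : γ (Prod.fst ⁻¹' Kᶜ) = 0 := by
        rw [← Measure.map_apply measurable_fst hKm.compl, hγ1]; exact hKnull
      have h2 : γ (Prod.snd ⁻¹' Kᶜ) = 0 := by
        rw [← Measure.map_apply measurable_snd hKm.compl, hγ2]; exact hμεnull
      have e1 : ∀ᵐ p ∂γ, p.1 ∈ K := by rw [ae_iff]; exact h1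
      have e2 : ∀ᵐ p ∂γ, p.2 ∈ K := by rw [ae_iff]; exact h2
      exact e1.and e2
    -- density nonnegative
    have hεM1 : ε * (M + 1) < 1 := (lt_div_iff₀ hM1).mp hεM
    have hdens : ∀ x, 0 ≤ 1 + ε * h x := by
      intro x
      have h1 : -M ≤ h x := neg_le_of_abs_le (hM x)
      nlinarith [mul_le_mul_of_nonneg_left h1 hε.le]
    -- integral against the perturbed measure
    have hμεint : ∫ x, φ x ∂(μ.withDensity fun x => ENNReal.ofReal (1 + ε * h x))
        = ∫ x, φ x ∂μ + ε * ∫ x, h x * φ x ∂μ := by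
      have hmeas' : Measurable fun x => (1 + ε * h x).toNNReal :=
        (measurable_const.add (hmeas.const_mul ε)).real_toNNReal
      have hrfl : (fun x => ENNReal.ofReal (1 + ε * h x))
          = fun x => ((1 + ε * h x).toNNReal : ENNReal) := rfl
      rw [hrfl, integral_withDensity_eq_integral_smul hmeas']
      have hsm : ∀ x, (1 + ε * h x).toNNReal • φ x = φ x + ε * (h x * φ x) := by
        intro x
        rw [NNReal.smul_def, Real.coe_toNNReal _ (hdens x), smul_eq_mul]; ring
      simp_rw [hsm]
      rw [integral_add hIφμ (hIhφμ.const_mul ε), integral_const_mul _ _]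
    have hsnd : ∫ x, φ x ∂(μ.withDensity fun x => ENNReal.ofReal (1 + ε * h x))
        = ∫ p, φ p.2 ∂γ := by
      rw [← hγ2, integral_map measurable_snd.aemeasurable hφc.aestronglyMeasurable]
    have hfst : ∫ x, φ x ∂μ = ∫ p, φ p.1 ∂γ := by
      rw [← hγ1, integral_map measurable_fst.aemeasurable hφc.aestronglyMeasurable]
    -- integrability over γ
    have hIφ2 : Integrable (fun p => φ p.2) γ := by
      refine (integrable_const Bφ).mono' (hφc.comp continuous_snd).aestronglyMeasurable ?_
      filter_upwards [haeγ] with p hp; exact hBφ _ hp.2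
    have hIφ1 : Integrable (fun p => φ p.1) γ := by
      refine (integrable_const Bφ).mono' (hφc.comp continuous_fst).aestronglyMeasurable ?_
      filter_upwards [haeγ] with p hp; exact hBφ _ hp.1
    have hIg1 : Integrable (fun p : EuclideanSpace ℝ (Fin n) × EuclideanSpace ℝ (Fin n)
        => ‖gradient φ p.1‖ ^ 2) γ := by
      refine (integrable_const (B1 ^ 2)).mono'
        (((hgradc.comp continuous_fst).norm.pow 2).aestronglyMeasurable) ?_
      filter_upwards [haeγ] with p hp
      rw [Real.norm_of_nonneg (by positivity)]
      exact pow_le_pow_left₀ (norm_nonneg _) (hB1 _ hp.1) 2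
    have hIg2 : Integrable (fun p : EuclideanSpace ℝ (Fin n) × EuclideanSpace ℝ (Fin n)
        => ‖p.1 - p.2‖ ^ 2) γ := by
      refine (integrable_const ((R + R) ^ 2)).mono'
        (((continuous_fst.sub continuous_snd).norm.pow 2).aestronglyMeasurable) ?_
      filter_upwards [haeγ] with p hp
      rw [Real.norm_of_nonneg (by positivity)]
      refine pow_le_pow_left₀ (norm_nonneg _) ?_ 2
      have hp1 : ‖p.1‖ ≤ R := mem_closedBall_zero_iff.mp (hR hp.1)
      have hp2 : ‖p.2‖ ≤ R := mem_closedBall_zero_iff.mp (hR hp.2)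
      calc ‖p.1 - p.2‖ ≤ ‖p.1‖ + ‖p.2‖ := norm_sub_le _ _
        _ ≤ R + R := add_le_add hp1 hp2
    have hI0 : Integrable (fun p => φ p.2 - φ p.1) γ := hIφ2.sub hIφ1
    -- transfer integrals
    have hIγ1 : ∫ x, ‖gradient φ x‖ ^ 2 ∂μ = ∫ p, ‖gradient φ p.1‖ ^ 2 ∂γ := by
      rw [← hγ1]
      exact integral_map measurable_fst.aemeasurable (hgradc.norm.pow 2).aestronglyMeasurable
    have hIγ2 : ∫ p, ‖p.1 - p.2‖ ^ 2 ∂γ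
        = (∫⁻ p, ENNReal.ofReal (‖p.1 - p.2‖ ^ 2) ∂γ).toReal := by
      rw [integral_eq_lintegral_of_nonneg_ae (f := fun p : EuclideanSpace ℝ (Fin n) × EuclideanSpace ℝ (Fin n) => ‖p.1 - p.2‖ ^ 2) (Filter.Eventually.of_forall fun p => by positivity)
        ((continuous_fst.sub continuous_snd).norm.pow 2).aestronglyMeasurable]
    -- cost bound
    have hΛle : (∫⁻ p, ENNReal.ofReal (‖p.1 - p.2‖ ^ 2) ∂γ)
        ≤ (c * ENNReal.ofReal ε) ^ (2 : ℝ) := by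
      have h2 := ENNReal.rpow_le_rpow hγlt'.le (by norm_num : (0:ℝ) ≤ 2)
      rwa [← ENNReal.rpow_mul, (by norm_num : (1 / 2 : ℝ) * 2 = 1), ENNReal.rpow_one] at h2
    have hRfin : (c * ENNReal.ofReal ε) ^ (2 : ℝ) ≠ ⊤ :=
      ENNReal.rpow_ne_top_of_nonneg (by norm_num)
        (ENNReal.mul_ne_top hcfin.ne ENNReal.ofReal_ne_top)
    have hCr : (∫⁻ p, ENNReal.ofReal (‖p.1 - p.2‖ ^ 2) ∂γ).toReal ≤ (c.toReal * ε) ^ 2 := by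
      have h3 := ENNReal.toReal_mono hRfin hΛle
      rwa [← ENNReal.toReal_rpow, ENNReal.toReal_mul, ENNReal.toReal_ofReal hε.le,
        Real.rpow_two] at h3
    set t : ℝ := c.toReal * ε with htdef
    have ht : 0 < t := mul_pos hcR hε
    -- pointwise estimate
    have hpt : ∀ᵐ p ∂γ, φ p.2 - φ p.1
        ≤ (t / 2) * ‖gradient φ p.1‖ ^ 2 + (1 / (2 * t) + C₂) * ‖p.1 - p.2‖ ^ 2 := by
      filter_upwards [haeγ] with p hp
      have h1 := htaylor p.1 hp.1 p.2 hp.2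
      rw [norm_sub_rev] at h1
      have key : (t / 2) * ‖gradient φ p.1‖ ^ 2 + (1 / (2 * t)) * ‖p.1 - p.2‖ ^ 2
          - ‖gradient φ p.1‖ * ‖p.1 - p.2‖
          = (t * ‖gradient φ p.1‖ - ‖p.1 - p.2‖) ^ 2 / (2 * t) := by
        field_simp; ring
      have hnn : 0 ≤ (t * ‖gradient φ p.1‖ - ‖p.1 - p.2‖) ^ 2 / (2 * t) :=
        div_nonneg (sq_nonneg _) (by linarith)
      nlinarith [h1]
    have hψint : Integrable (fun p : EuclideanSpace ℝ (Fin n) × EuclideanSpace ℝ (Fin n) =>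
        (t / 2) * ‖gradient φ p.1‖ ^ 2 + (1 / (2 * t) + C₂) * ‖p.1 - p.2‖ ^ 2) γ :=
      (hIg1.const_mul _).add (hIg2.const_mul _)
    have hmono := integral_mono_ae hI0 hψint hpt
    rw [integral_add (hIg1.const_mul _) (hIg2.const_mul _), integral_const_mul _ _,
      integral_const_mul _ _] at hmono
    have hchain : ∫ p, (φ p.2 - φ p.1) ∂γ = ε * ∫ x, h x * φ x ∂μ := by
      rw [integral_sub hIφ2 hIφ1, ← hsnd, ← hfst, hμεint]; ring
    have hg01 : 0 ≤ ∫ x, ‖gradient φ x‖ ^ 2 ∂μ := integral_nonneg fun x => by positivity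
    have hfinal : ε * ∫ x, h x * φ x ∂μ ≤ t / 2 * 1 + (1 / (2 * t) + C₂) * t ^ 2 := by
      rw [← hchain]
      refine le_trans hmono (add_le_add ?_ ?_)
      · have hle1 : ∫ p, ‖gradient φ p.1‖ ^ 2 ∂γ ≤ 1 := hIγ1 ▸ hφ1
        exact mul_le_mul_of_nonneg_left hle1 (by positivity)
      · have hle2 : ∫ p, ‖p.1 - p.2‖ ^ 2 ∂γ ≤ t ^ 2 := by rw [hIγ2, htdef]; exact hCr
        refine mul_le_mul_of_nonneg_left hle2 ?_
        have : 0 < 1 / (2 * t) := by positivity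
        linarith
    have heq : t / 2 * 1 + (1 / (2 * t) + C₂) * t ^ 2
        = ε * (c.toReal + C₂ * c.toReal ^ 2 * ε) := by
      rw [htdef]; field_simp; ring
    rw [heq] at hfinal
    exact le_of_mul_le_mul_left hfinal hε
  -- conclude via frequently
  have hfreq : ∃ᶠ ε in nhdsWithin (0:ℝ) (Set.Ioi 0),
      W2 μ (μ.withDensity fun x => ENNReal.ofReal (1 + ε * h x)) / ENNReal.ofReal ε < c :=
    Filter.frequently_lt_of_liminf_lt (by isBoundedDefault) hc1
  have hden : (0:ℝ) < C₂ * c.toReal ^ 2 + 1 := by nlinarith [mul_nonneg hC₂0 (sq_nonneg c.toReal)]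
  have hle : ∫ x, h x * φ x ∂μ ≤ c.toReal := by
    refine le_of_forall_pos_le_add fun δ hδ => ?_
    have hε'pos : 0 < min (1 / (M + 1)) (δ / (C₂ * c.toReal ^ 2 + 1)) :=
      lt_min (by positivity) (div_pos hδ hden)
    have hev : ∀ᶠ x in nhdsWithin (0:ℝ) (Set.Ioi 0),
        x ∈ Set.Ioo (0:ℝ) (min (1 / (M + 1)) (δ / (C₂ * c.toReal ^ 2 + 1))) :=
      Ioo_mem_nhdsGT_of_mem ⟨le_refl 0, hε'pos⟩
    obtain ⟨ε, hlt, hmem⟩ := (hfreq.and_eventually hev).exists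
    have hb := hkey ε hmem.1 (lt_of_lt_of_le hmem.2 (min_le_left _ _)) hlt
    have h1 : ε ≤ δ / (C₂ * c.toReal ^ 2 + 1) :=
      le_of_lt (lt_of_lt_of_le hmem.2 (min_le_right _ _))
    have h2 : C₂ * c.toReal ^ 2 * ε ≤ δ := by
      have h3 := mul_le_mul_of_nonneg_left h1 (mul_nonneg hC₂0 (sq_nonneg c.toReal))
      have h4 : C₂ * c.toReal ^ 2 * (δ / (C₂ * c.toReal ^ 2 + 1)) ≤ δ := by
        rw [mul_comm, div_mul_eq_mul_div, div_le_iff₀ hden]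
        nlinarith [mul_nonneg hC₂0 (sq_nonneg c.toReal), hδ.le]
      linarith
    linarith
  exact absurd (ENNReal.ofReal_le_of_le_toReal hle) (not_le.mpr hc2)
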